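/- Let N ≥ 1 be an integer and let p > 1, b > 0 and a ≥ 0 be real numbers. Define φ(y,s) = (p−1 + b|y|²/s)^{−1/(p−1)} + a/s for y ∈ ℝ^N, s > 0, and define the potential V(y,s) = p·(φ(y,s)^{p−1} − 1/(p−1)). Then: (i) ∫_{ℝ^N} V(y,s)²·ρ(y) dy → 0 as s → +∞, where ρ(y) = (4π)^{−N/2}·exp(−|y|²/4); and (ii) for every ε > 0 there exist C_ε > 0 and s_ε > 0 such that |V(y,s) − (−p/(p−1))| ≤ ε for all s ≥ s_ε and all y ∈ ℝ^N with |y| ≥ C_ε·√s. -/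

import Mathlib

open MeasureTheory Filter

lemma aux_integrable_gauss (N : ℕ) :
    Integrable (fun y : EuclideanSpace ℝ (Fin N) => Real.exp (-‖y‖ ^ 2 / 4)) := by
  have h := (GaussianFourier.integrable_cexp_neg_mul_sq_norm_add (V := EuclideanSpace ℝ (Fin N))
    (b := (1/4 : ℂ)) (by norm_num) 0 0).norm
  refine h.congr (Filter.Eventually.of_forall fun y => ?_)
  simp only [Complex.norm_exp]
  congr 1
  simp [← Complex.ofReal_pow]
  ring

/-- The two key properties of the potential
`V(y,s) = p (φ(y,s)^(p-1) - 1/(p-1))` with `φ(y,s) = (p-1+b|y|²/s)^(-1/(p-1)) + a/s`: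
(i) `V(·,s) → 0` in `L²_ρ(ℝ^N)` as `s → ∞` (here: `∫ V² ρ → 0`), and
(ii) `V` is uniformly close to `-p/(p-1)` in the region `|y| ≥ C_ε √s`. -/
theorem stmt17 (N : ℕ) (hN : 1 ≤ N) (p b a : ℝ) (hp : 1 < p) (hb : 0 < b) (ha : 0 ≤ a) :
    let φ : EuclideanSpace ℝ (Fin N) → ℝ → ℝ := fun y s =>
      (p - 1 + b * ‖y‖ ^ 2 / s) ^ (-(1 / (p - 1)) : ℝ) + a / s
    let V : EuclideanSpace ℝ (Fin N) → ℝ → ℝ := fun y s =>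
      p * (φ y s ^ (p - 1) - 1 / (p - 1))
    (Tendsto (fun s : ℝ =>
        ∫ y : EuclideanSpace ℝ (Fin N),
          (V y s) ^ 2 * ((4 * Real.pi) ^ (-(N : ℝ) / 2) * Real.exp (-‖y‖ ^ 2 / 4)))
      atTop (nhds 0)) ∧
    (∀ ε > (0 : ℝ), ∃ Cε > (0 : ℝ), ∃ sε > (0 : ℝ),
      ∀ s ≥ sε, ∀ y : EuclideanSpace ℝ (Fin N), Cε * Real.sqrt s ≤ ‖y‖ →
        |V y s - (-(p / (p - 1)))| ≤ ε) := by
  intro φ V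
  have hp1 : (0:ℝ) < p - 1 := by linarith
  have hppos : (0:ℝ) < p := by linarith
  set e : ℝ := -(1 / (p - 1)) with he
  -- positivity of base for s > 0
  have hbase : ∀ (y : EuclideanSpace ℝ (Fin N)) (s : ℝ), 0 < s →
      0 < p - 1 + b * ‖y‖ ^ 2 / s := by
    intro y s hs
    have : 0 ≤ b * ‖y‖ ^ 2 / s := by positivity
    linarith
  have hφpos : ∀ (y : EuclideanSpace ℝ (Fin N)) (s : ℝ), 0 < s → 0 < φ y s := by
    intro y s hs
    have h1 : 0 < (p - 1 + b * ‖y‖ ^ 2 / s) ^ e := Real.rpow_pos_of_pos (hbase y s hs) e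
    have h2 : 0 ≤ a / s := by positivity
    simp only [φ]
    linarith
  constructor
  · -- Part (i)
    set ρ : EuclideanSpace ℝ (Fin N) → ℝ := fun y =>
      (4 * Real.pi) ^ (-(N : ℝ) / 2) * Real.exp (-‖y‖ ^ 2 / 4) with hρ
    have hρpos : ∀ y, 0 < ρ y := by
      intro y
      have : (0:ℝ) < 4 * Real.pi := by positivity
      exact mul_pos (Real.rpow_pos_of_pos this _) (Real.exp_pos _)
    have hρint : Integrable ρ :=
      (aux_integrable_gauss N).const_mul _
    set K : ℝ := (p - 1) ^ e + a with hK
    have hKpos : 0 < K := by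
      have := Real.rpow_pos_of_pos hp1 e
      simp only [hK]; linarith
    set M : ℝ := p * (K ^ (p - 1) + 1 / (p - 1)) with hM
    have hφle : ∀ (y : EuclideanSpace ℝ (Fin N)) (s : ℝ), 1 ≤ s → φ y s ≤ K := by
      intro y s hs1
      have hs : (0:ℝ) < s := lt_of_lt_of_le one_pos hs1
      have h1 : (p - 1 + b * ‖y‖ ^ 2 / s) ^ e ≤ (p - 1) ^ e := by
        apply Real.rpow_le_rpow_of_nonpos hp1
        · have : 0 ≤ b * ‖y‖ ^ 2 / s := by positivity
          linarith
        · rw [he]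
          have : 0 < 1 / (p - 1) := by positivity
          linarith
      have h2 : a / s ≤ a := div_le_self ha hs1
      simp only [φ, hK]; linarith
    have hVbound : ∀ (y : EuclideanSpace ℝ (Fin N)) (s : ℝ), 1 ≤ s → |V y s| ≤ M := by
      intro y s hs1
      have hs : (0:ℝ) < s := lt_of_lt_of_le one_pos hs1
      have h0 : 0 ≤ φ y s ^ (p - 1) := Real.rpow_nonneg (hφpos y s hs).le _
      have h1 : φ y s ^ (p - 1) ≤ K ^ (p - 1) :=
        Real.rpow_le_rpow (hφpos y s hs).le (hφle y s hs1) hp1.le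
      have h2 : 0 < 1 / (p - 1) := by positivity
      rw [abs_le]
      constructor
      · simp only [V, hM]; nlinarith
      · simp only [V, hM]; nlinarith
    have key := MeasureTheory.tendsto_integral_filter_of_dominated_convergence
      (μ := (volume : Measure (EuclideanSpace ℝ (Fin N)))) (l := (atTop : Filter ℝ))
      (F := fun (s : ℝ) (y : EuclideanSpace ℝ (Fin N)) => (V y s) ^ 2 * ρ y)
      (f := fun _ => (0:ℝ)) (bound := fun y => M ^ 2 * ρ y)
      ?_ ?_ ?_ ?_
    · simpa using key
    · -- measurability
      filter_upwards [eventually_ge_atTop (1:ℝ)] with s hs1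
      have hs : (0:ℝ) < s := lt_of_lt_of_le one_pos hs1
      have hc1 : Continuous fun y : EuclideanSpace ℝ (Fin N) =>
          p - 1 + b * ‖y‖ ^ 2 / s := by fun_prop
      have hc2 : Continuous fun y : EuclideanSpace ℝ (Fin N) =>
          (p - 1 + b * ‖y‖ ^ 2 / s) ^ e := by
        apply hc1.rpow_const
        intro y
        exact Or.inl (hbase y s hs).ne'
      have hcφ : Continuous fun y : EuclideanSpace ℝ (Fin N) => φ y s :=
        hc2.add continuous_const
      have hcφp : Continuous fun y : EuclideanSpace ℝ (Fin N) => φ y s ^ (p - 1) := by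
        apply hcφ.rpow_const
        intro y
        exact Or.inl (hφpos y s hs).ne'
      have hcρ : Continuous ρ := by
        apply continuous_const.mul
        exact (Real.continuous_exp.comp (by fun_prop))
      exact (((continuous_const.mul (hcφp.sub continuous_const)).pow 2).mul hcρ).aestronglyMeasurable
    · -- bound
      filter_upwards [eventually_ge_atTop (1:ℝ)] with s hs1
      filter_upwards with y
      have hV := hVbound y s hs1
      have h1 : (V y s) ^ 2 ≤ M ^ 2 := sq_le_sq' (abs_le.mp hV).1 (abs_le.mp hV).2
      have h2 : 0 ≤ (V y s) ^ 2 * ρ y := mul_nonneg (sq_nonneg _) (hρpos y).le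
      rw [Real.norm_eq_abs, abs_of_nonneg h2]
      exact mul_le_mul_of_nonneg_right h1 (hρpos y).le
    · exact hρint.const_mul _
    · -- pointwise limit
      filter_upwards with y
      have h1 : Tendsto (fun s : ℝ => b * ‖y‖ ^ 2 / s) atTop (nhds 0) :=
        Tendsto.div_atTop tendsto_const_nhds tendsto_id
      have h2 : Tendsto (fun s : ℝ => p - 1 + b * ‖y‖ ^ 2 / s) atTop (nhds (p - 1)) := by
        have := tendsto_const_nhds (x := p - 1) (f := atTop (α := ℝ)) |>.add h1
        simpa using this
      have h3 : Tendsto (fun s : ℝ => (p - 1 + b * ‖y‖ ^ 2 / s) ^ e) atTop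
          (nhds ((p - 1) ^ e)) :=
        ((Real.continuousAt_rpow_const (p - 1) e (Or.inl hp1.ne')).tendsto).comp h2
      have h4 : Tendsto (fun s : ℝ => a / s) atTop (nhds 0) :=
        Tendsto.div_atTop tendsto_const_nhds tendsto_id
      have h5 : Tendsto (fun s : ℝ => φ y s) atTop (nhds ((p - 1) ^ e)) := by
        have := h3.add h4
        simpa using this
      have hL : (0:ℝ) < (p - 1) ^ e := Real.rpow_pos_of_pos hp1 e
      have h6 : Tendsto (fun s : ℝ => φ y s ^ (p - 1)) atTop
          (nhds (((p - 1) ^ e) ^ (p - 1))) :=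
        ((Real.continuousAt_rpow_const _ (p - 1) (Or.inl hL.ne')).tendsto).comp h5
      have hLval : ((p - 1) ^ e) ^ (p - 1) = 1 / (p - 1) := by
        rw [← Real.rpow_mul hp1.le]
        have hev : e * (p - 1) = -1 := by
          rw [he]; field_simp
        rw [hev, Real.rpow_neg_one]
        exact (one_div _).symm
      have h7 : Tendsto (fun s : ℝ => V y s) atTop (nhds 0) := by
        have h := (h6.sub (tendsto_const_nhds (x := 1 / (p - 1)))).const_mul p
        rw [hLval] at h
        simp only [V]
        simpa using h
      have h8 := (h7.pow 2).mul_const (ρ y)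
      simpa using h8
  · -- Part (ii)
    intro ε hε
    set δ : ℝ := (ε / p) ^ (1 / (p - 1)) with hδ
    have hδpos : 0 < δ := Real.rpow_pos_of_pos (by positivity) _
    set R : ℝ := max 1 ((δ / 2) ^ (-(p - 1))) with hR
    have hRpos : 0 < R := lt_of_lt_of_le one_pos (le_max_left _ _)
    refine ⟨Real.sqrt (R / b), Real.sqrt_pos.mpr (by positivity), max 1 (2 * a / δ + 1),
      lt_of_lt_of_le one_pos (le_max_left _ _), ?_⟩
    intro s hs y hy
    have hs1 : (1:ℝ) ≤ s := le_trans (le_max_left _ _) hs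
    have hs0 : (0:ℝ) < s := lt_of_lt_of_le one_pos hs1
    -- ‖y‖² ≥ (R/b) * s
    have hy2 : R / b * s ≤ ‖y‖ ^ 2 := by
      have h0 : 0 ≤ Real.sqrt (R / b) * Real.sqrt s := by positivity
      have := mul_self_le_mul_self h0 hy
      calc R / b * s = (Real.sqrt (R / b) * Real.sqrt s) * (Real.sqrt (R / b) * Real.sqrt s) := by
            rw [mul_mul_mul_comm, Real.mul_self_sqrt (by positivity), Real.mul_self_sqrt hs0.le]
        _ ≤ ‖y‖ * ‖y‖ := this
        _ = ‖y‖ ^ 2 := (sq ‖y‖).symm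
    have hbX : R ≤ b * ‖y‖ ^ 2 / s := by
      rw [le_div_iff₀ hs0]
      have h1 : b * (R / b * s) ≤ b * ‖y‖ ^ 2 := mul_le_mul_of_nonneg_left hy2 hb.le
      have h2 : b * (R / b * s) = R * s := by field_simp
      linarith
    -- first term of φ is ≤ δ/2
    have hterm1 : (p - 1 + b * ‖y‖ ^ 2 / s) ^ e ≤ δ / 2 := by
      have hδ2 : (0:ℝ) < δ / 2 := by positivity
      have hMle : (δ / 2) ^ (-(p - 1)) ≤ p - 1 + b * ‖y‖ ^ 2 / s := by
        have : (δ / 2) ^ (-(p - 1)) ≤ R := le_max_right _ _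
        linarith
      have h1 : (p - 1 + b * ‖y‖ ^ 2 / s) ^ e ≤ ((δ / 2) ^ (-(p - 1))) ^ e := by
        apply Real.rpow_le_rpow_of_nonpos (Real.rpow_pos_of_pos hδ2 _) hMle
        rw [he]
        have : 0 < 1 / (p - 1) := by positivity
        linarith
      have h2 : ((δ / 2) ^ (-(p - 1) : ℝ)) ^ e = δ / 2 := by
        rw [← Real.rpow_mul hδ2.le]
        have : -(p - 1) * e = 1 := by rw [he]; field_simp
        rw [this, Real.rpow_one]
      linarith [h1, h2 ▸ h1]
    -- second term ≤ δ/2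
    have hterm2 : a / s ≤ δ / 2 := by
      have hs2 : 2 * a / δ + 1 ≤ s := le_trans (le_max_right _ _) hs
      rw [div_le_div_iff₀ hs0 (by norm_num : (0:ℝ) < 2)]
      have : 2 * a ≤ δ * (2 * a / δ) := by
        rw [mul_div_assoc', mul_comm δ, mul_div_assoc]
        rw [div_self hδpos.ne', mul_one]
      nlinarith [mul_le_mul_of_nonneg_left hs2 hδpos.le]
    have hφδ : φ y s ≤ δ := by
      simp only [φ]; linarith
    have hφp : φ y s ^ (p - 1) ≤ ε / p := by
      have h1 : φ y s ^ (p - 1) ≤ δ ^ (p - 1) :=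
        Real.rpow_le_rpow (hφpos y s hs0).le hφδ hp1.le
      have h2 : δ ^ (p - 1) = ε / p := by
        rw [hδ, ← Real.rpow_mul (by positivity : (0:ℝ) ≤ ε / p)]
        rw [one_div, inv_mul_cancel₀ hp1.ne', Real.rpow_one]
      linarith [h2 ▸ h1]
    have hφp0 : 0 ≤ φ y s ^ (p - 1) := Real.rpow_nonneg (hφpos y s hs0).le _
    have hVeq : V y s - (-(p / (p - 1))) = p * (φ y s ^ (p - 1)) := by
      simp only [V]
      field_simp
      ring
    rw [hVeq, abs_of_nonneg (by positivity)]
    calc p * φ y s ^ (p - 1) ≤ p * (ε / p) :=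
          mul_le_mul_of_nonneg_left hφp hppos.le
      _ = ε := by field_simp
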